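/- Let t ↦ (x_t, y_t) be the unique solution of the ODE ż = B(z) on its maximal forward interval [0, 𝒯) with (x∘, y∘) ∈ S, suppose 𝒯 < ∞, and let x_- = min{x∘, x_∞} and ť = sup{ t < 𝒯 : x_t ≥ x_- /2 }. Then the set U = (0, x_- /2) × [0, ∞) is forward invariant on (ť, 𝒯): if (x_{t'}, y_{t'}) ∈ U for some t' ∈ (ť, 𝒯), then (x_t, y_t) ∈ U for all t ∈ [t', 𝒯). -/

import Mathlib

open Real Set Filter Topology

/-- The optimal-velocity function `V(x) = tanh(x-2) - tanh(-2)`. -/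
noncomputable def V (x : ℝ) : ℝ := Real.tanh (x - 2) - Real.tanh (-2)

/-- Inverse hyperbolic tangent. -/
noncomputable def artanh (v : ℝ) : ℝ := (1 / 2) * Real.log ((1 + v) / (1 - v))

/-- The equilibrium following distance `x_∞ = d (2 + artanh(v∘ + tanh(-2)))`. -/
noncomputable def xInf (d v₀ : ℝ) : ℝ := d * (2 + _root_.artanh (v₀ + Real.tanh (-2)))

/-- `IsSol α β d v₀ x y T` says that `t ↦ (x t, y t)` solves the ODE `ż = B(z)` on the
forward time interval `[0, T)`, staying in the state space `S = (0,∞) × ℝ`. -/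
def IsSol (α β d v₀ : ℝ) (x y : ℝ → ℝ) (T : EReal) : Prop :=
  ∀ t : ℝ, 0 ≤ t → (t : EReal) < T →
    0 < x t ∧ HasDerivAt x (y t) t ∧
      HasDerivAt y (-α * (V (x t / d) - v₀ + y t) - β * y t / (x t) ^ 2) t

/-- `[0, T)` is the maximal forward interval of definition. -/
def IsMaximal (α β d v₀ : ℝ) (x y : ℝ → ℝ) (T : EReal) : Prop :=
  ∀ (T' : EReal) (x' y' : ℝ → ℝ), T < T' → IsSol α β d v₀ x' y' T' →
    x' 0 = x 0 → y' 0 = y 0 → False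

lemma tanh_formula (x : ℝ) : Real.tanh x = 1 - 2 / (Real.exp (2*x) + 1) := by
  rw [Real.tanh_eq_sinh_div_cosh, Real.sinh_eq, Real.cosh_eq]
  have h1 : (0:ℝ) < Real.exp x := Real.exp_pos x
  have h2 : (0:ℝ) < Real.exp (-x) := Real.exp_pos _
  have h3 : Real.exp (2*x) = Real.exp x * Real.exp x := by
    rw [← Real.exp_add]; ring_nf
  have h4 : Real.exp x * Real.exp (-x) = 1 := by rw [← Real.exp_add]; simp
  rw [h3]
  have h5 : Real.exp x * Real.exp x + 1 > 0 := by positivity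
  field_simp
  nlinarith [h4]

lemma tanh_strictMono : StrictMono Real.tanh := by
  intro a b hab
  rw [tanh_formula, tanh_formula]
  have h1 : Real.exp (2*a) < Real.exp (2*b) := Real.exp_lt_exp.2 (by linarith)
  have h2 : (0:ℝ) < Real.exp (2*a) + 1 := by positivity
  have h3 : (0:ℝ) < Real.exp (2*b) + 1 := by positivity
  have h4 : 2 / (Real.exp (2*b) + 1) < 2 / (Real.exp (2*a) + 1) :=
    div_lt_div_of_pos_left (by norm_num) h2 (by linarith)
  linarith

lemma tanh_lt_one' (x : ℝ) : Real.tanh x < 1 := by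
  rw [tanh_formula]
  have h : (0:ℝ) < Real.exp (2*x) + 1 := by positivity
  have : 0 < 2 / (Real.exp (2*x) + 1) := by positivity
  linarith

lemma tanh_artanh {w : ℝ} (h1 : -1 < w) (h2 : w < 1) : Real.tanh (_root_.artanh w) = w := by
  rw [tanh_formula, _root_.artanh]
  have hp : (0:ℝ) < (1 + w) / (1 - w) := by
    apply div_pos <;> linarith
  have he : Real.exp (2 * ((1/2) * Real.log ((1 + w) / (1 - w)))) = (1 + w) / (1 - w) := by
    rw [show 2 * ((1/2) * Real.log ((1 + w) / (1 - w))) = Real.log ((1 + w) / (1 - w)) by ring]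
    exact Real.exp_log hp
  rw [he]
  have hne : (1:ℝ) - w ≠ 0 := by linarith
  field_simp
  ring

/-- with `𝒯 < ∞`, `x₋ = min{x∘, x_∞}` and
`ť = sup{ t < 𝒯 : x_t ≥ x₋ / 2 }`, the upper region `U = (0, x₋ / 2) × [0,∞)` is forward
invariant on `(ť, 𝒯)`. -/
theorem upper_region_invariant (α β d v₀ : ℝ)
    (hα : 0 < α) (hβ : 0 < β) (hd : 0 < d)
    (hv₀ : v₀ ∈ Set.Ioo 0 (1 + Real.tanh 2))
    (x y : ℝ → ℝ) (T : ℝ) (hT : 0 < T)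
    (x₀ y₀ : ℝ) (hx₀ : 0 < x₀) (hinit : x 0 = x₀ ∧ y 0 = y₀)
    (hsol : IsSol α β d v₀ x y (T : EReal))
    (hmax : IsMaximal α β d v₀ x y (T : EReal))
    (xm : ℝ) (hxm : xm = min x₀ (xInf d v₀))
    (tc : ℝ) (htc : tc = sSup {t : ℝ | 0 ≤ t ∧ t < T ∧ xm / 2 ≤ x t}) :
    ∀ t' : ℝ, tc < t' → t' < T →
      (0 < x t' ∧ x t' < xm / 2 ∧ 0 ≤ y t') →
      ∀ t : ℝ, t' ≤ t → t < T → 0 < x t ∧ x t < xm / 2 ∧ 0 ≤ y t := by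
  obtain ⟨hv0pos, hv0lt⟩ := hv₀
  have htanh2lt1 : Real.tanh 2 < 1 := tanh_lt_one' 2
  have hneg2 : Real.tanh (-2) = - Real.tanh 2 := Real.tanh_neg 2
  have hw1 : (-1:ℝ) < v₀ + Real.tanh (-2) := by rw [hneg2]; linarith
  have hw2 : v₀ + Real.tanh (-2) < 1 := by rw [hneg2]; linarith
  have hart : Real.tanh (_root_.artanh (v₀ + Real.tanh (-2))) = v₀ + Real.tanh (-2) :=
    tanh_artanh hw1 hw2
  have hart_gt : -2 < _root_.artanh (v₀ + Real.tanh (-2)) := by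
    have h : Real.tanh (-2) < Real.tanh (_root_.artanh (v₀ + Real.tanh (-2))) := by
      rw [hart, hneg2]; linarith
    exact tanh_strictMono.lt_iff_lt.mp h
  have hxInf : 0 < xInf d v₀ := by
    rw [xInf]; apply mul_pos hd; linarith
  have hxmpos : 0 < xm := by rw [hxm]; exact lt_min hx₀ hxInf
  have hxm2 : xm / 2 < xInf d v₀ := by
    have : xm ≤ xInf d v₀ := hxm ▸ min_le_right _ _
    linarith
  have hV : ∀ w : ℝ, w < xInf d v₀ → V (w / d) < v₀ := by
    intro w hw
    rw [xInf] at hw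
    have h1 : w / d < 2 + _root_.artanh (v₀ + Real.tanh (-2)) := by
      rw [div_lt_iff₀ hd]; linarith
    have h2 : Real.tanh (w / d - 2) < v₀ + Real.tanh (-2) := by
      rw [← hart]; exact tanh_strictMono (by linarith)
    show Real.tanh (w / d - 2) - Real.tanh (-2) < v₀
    linarith
  have hbdd : BddAbove {t : ℝ | 0 ≤ t ∧ t < T ∧ xm / 2 ≤ x t} :=
    ⟨T, fun u hu => hu.2.1.le⟩
  have htc0 : 0 ≤ tc := by
    rcases Set.eq_empty_or_nonempty {t : ℝ | 0 ≤ t ∧ t < T ∧ xm / 2 ≤ x t} with h | ⟨u, hu⟩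
    · rw [htc, h, Real.sSup_empty]
    · exact le_trans hu.1 (htc ▸ le_csSup hbdd hu)
  have hA : ∀ t : ℝ, tc < t → t < T → x t < xm / 2 := by
    intro t ht htT
    by_contra h
    push_neg at h
    have hmem : t ∈ {t : ℝ | 0 ≤ t ∧ t < T ∧ xm / 2 ≤ x t} := ⟨le_trans htc0 ht.le, htT, h⟩
    have h2 := le_csSup hbdd hmem
    rw [← htc] at h2
    linarith
  intro t' htc' ht'T hU t htt' htT
  have h0t' : 0 ≤ t' := le_trans htc0 htc'.le
  have h0t : 0 ≤ t := le_trans h0t' htt'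
  have hcast : ∀ {u : ℝ}, u < T → (u : EReal) < (T : EReal) := fun h => EReal.coe_lt_coe_iff.2 h
  refine ⟨(hsol t h0t (hcast htT)).1, hA t (lt_of_lt_of_le htc' htt') htT, ?_⟩
  by_contra hyt
  push_neg at hyt
  set K2 := {u : ℝ | u ∈ Set.Icc t' t ∧ 0 ≤ y u} with hK2
  have hmemt' : t' ∈ K2 := ⟨⟨le_refl _, htt'⟩, hU.2.2⟩
  have hbdd2 : BddAbove K2 := ⟨t, fun u hu => hu.1.2⟩
  set s := sSup K2 with hs
  have hst' : t' ≤ s := le_csSup hbdd2 hmemt'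
  have hst : s ≤ t := csSup_le ⟨t', hmemt'⟩ fun u hu => hu.1.2
  have h0s : 0 ≤ s := le_trans h0t' hst'
  have hsT : s < T := lt_of_le_of_lt hst htT
  have hconty : ∀ u : ℝ, 0 ≤ u → u < T → ContinuousAt y u := fun u h1 h2 =>
    ((hsol u h1 (hcast h2)).2.2).continuousAt
  have hys : 0 ≤ y s := by
    by_contra h
    push_neg at h
    have hev : ∀ᶠ u in 𝓝 s, y u < 0 := (hconty s h0s hsT).eventually_lt_const h
    obtain ⟨ε, hε, hball⟩ := Metric.eventually_nhds_iff.1 hev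
    obtain ⟨u, hu, hu2⟩ := exists_lt_of_lt_csSup ⟨t', hmemt'⟩ (show s - ε < s by linarith)
    have hule : u ≤ s := le_csSup hbdd2 hu
    have hdist : dist u s < ε := by
      rw [Real.dist_eq, abs_lt]; constructor <;> linarith
    have := hball hdist
    have := hu.2
    linarith
  have hslt : s < t := lt_of_le_of_ne hst (fun h => by rw [h] at hys; linarith)
  have hfinal : ∀ u : ℝ, s < u → u ≤ t → 0 ≤ y u → False := by
    intro u h1 h2 h3
    have hm : u ∈ K2 := ⟨⟨le_trans hst' h1.le, h2⟩, h3⟩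
    have := le_csSup hbdd2 hm
    linarith
  rcases eq_or_lt_of_le hys with hys0 | hyspos
  · obtain ⟨hxs, _, hdy⟩ := hsol s h0s (hcast hsT)
    have hxslt : x s < xm / 2 := hA s (lt_of_lt_of_le htc' hst') hsT
    have hVlt : V (x s / d) < v₀ := hV _ (lt_trans hxslt hxm2)
    have hD : 0 < -α * (V (x s / d) - v₀ + y s) - β * y s / (x s) ^ 2 := by
      rw [← hys0]
      have h1 : 0 < α * (v₀ - V (x s / d)) := mul_pos hα (by linarith)
      have h2 : -α * (V (x s / d) - v₀ + 0) - β * 0 / (x s) ^ 2 = α * (v₀ - V (x s / d)) := by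
        ring
      rw [h2]; exact h1
    rw [hasDerivAt_iff_tendsto_slope] at hdy
    have hev1 : ∀ᶠ u in 𝓝[>] s, 0 < slope y s u := by
      have h1 : ∀ᶠ u in 𝓝[≠] s, 0 < slope y s u := hdy.eventually_const_lt hD
      exact h1.filter_mono (nhdsWithin_mono s (fun u hu => ne_of_gt hu))
    have hev2 : ∀ᶠ u in 𝓝[>] s, u < t :=
      mem_nhdsWithin_of_mem_nhds (Iio_mem_nhds hslt)
    have hev3 : ∀ᶠ u in 𝓝[>] s, s < u := self_mem_nhdsWithin
    obtain ⟨u, hu1, hu2, hu3⟩ := (hev1.and (hev2.and hev3)).exists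
    rw [slope_def_field] at hu1
    have hus : 0 < u - s := sub_pos.2 hu3
    have hyu : 0 < y u - y s := by
      rcases div_pos_iff.mp hu1 with ⟨h1, _⟩ | ⟨_, h2⟩
      · exact h1
      · linarith
    exact hfinal u hu3 hu2.le (by linarith)
  · have hev : ∀ᶠ u in 𝓝 s, 0 < y u := (hconty s h0s hsT).eventually_const_lt hyspos
    obtain ⟨ε, hε, hball⟩ := Metric.eventually_nhds_iff.1 hev
    set u := min (s + ε/2) ((s+t)/2) with hu
    have hu1 : s < u := lt_min (by linarith) (by linarith)
    have hu2 : u ≤ t := le_trans (min_le_right _ _) (by linarith)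
    have hu3 : dist u s < ε := by
      have h1 : u ≤ s + ε/2 := min_le_left _ _
      rw [Real.dist_eq, abs_lt]; constructor <;> linarith
    exact hfinal u hu1 hu2 (hball hu3).le
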